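/- Let A be the operator field on ℝ^n (coordinates x₁,...,x_n) in first companion form with σ_i = x_i: first column −(x₁,...,x_n)^T, ones on the superdiagonal. Then A is a Nijenhuis operator (its Nijenhuis torsion vanishes identically), and its characteristic polynomial at the point x is t^n + x₁ t^{n−1} + ... + x_n. -/

import Mathlib

open Matrix Polynomial

/-- Partial derivative `∂f/∂x_k` at `x`. -/
noncomputable def pd {n : ℕ} (k : Fin n) (f : (Fin n → ℝ) → ℝ) (x : Fin n → ℝ) : ℝ :=
  fderiv ℝ f x (Pi.single k 1)

/-- The operator field on `ℝ^n` in first companion form with `σ_i = x_i`: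
first column `−(x₁,…,x_n)ᵀ`, ones on the superdiagonal. -/
def Acomp (n : ℕ) (x : Fin n → ℝ) : Matrix (Fin n) (Fin n) ℝ :=
  fun i j => if (j : ℕ) = (i : ℕ) + 1 then 1
    else if (j : ℕ) = 0 then -(x i) else 0

lemma pd_Acomp (n : ℕ) (k i m : Fin n) (x : Fin n → ℝ) :
    pd k (fun y => Acomp n y i m) x = if (m:ℕ) = 0 then (if k = i then -1 else 0) else 0 := by
  unfold pd
  by_cases h1 : (m:ℕ) = (i:ℕ)+1
  · have h2 : (m:ℕ) ≠ 0 := by omega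
    have hfun : (fun y : Fin n → ℝ => Acomp n y i m) = fun _ => (1:ℝ) := by
      funext y
      show (if (m:ℕ) = (i:ℕ)+1 then (1:ℝ) else if (m:ℕ) = 0 then -(y i) else 0) = 1
      rw [if_pos h1]
    rw [hfun, fderiv_fun_const]
    simp [h2]
  · by_cases h2 : (m:ℕ) = 0
    · have hfun : (fun y : Fin n → ℝ => Acomp n y i m) = fun y => -(y i) := by
        funext y
        show (if (m:ℕ) = (i:ℕ)+1 then (1:ℝ) else if (m:ℕ) = 0 then -(y i) else 0) = -(y i)
        rw [if_neg h1, if_pos h2]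
      have hd : HasFDerivAt (fun y : Fin n → ℝ => -(y i))
          (-(ContinuousLinearMap.proj i : (Fin n → ℝ) →L[ℝ] ℝ)) x :=
        HasFDerivAt.neg (ContinuousLinearMap.hasFDerivAt
          (ContinuousLinearMap.proj (R := ℝ) (φ := fun _ : Fin n => ℝ) i) (x := x))
      rw [hfun, hd.fderiv]
      rcases eq_or_ne k i with h | h
      · simp [Pi.single_apply, h2, h]
      · simp [Pi.single_apply, h2, h, Ne.symm h]
    · have hfun : (fun y : Fin n → ℝ => Acomp n y i m) = fun _ => (0:ℝ) := by
        funext y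
        show (if (m:ℕ) = (i:ℕ)+1 then (1:ℝ) else if (m:ℕ) = 0 then -(y i) else 0) = 0
        rw [if_neg h1, if_neg h2]
      rw [hfun, fderiv_fun_const]
      simp [h2]


lemma det_charmatrix_Acomp : ∀ (n : ℕ) (x : Fin n → ℝ),
    (charmatrix (Acomp n x)).det
      = X ^ n + ∑ i : Fin n, C (x i) * X ^ (n - 1 - (i : ℕ)) := by
  intro n
  induction n with
  | zero => intro x; simp [Matrix.det_fin_zero]
  | succ m ih =>
    intro x
    match m, ih with
    | 0, _ =>
      simp [Matrix.det_fin_one, charmatrix_apply_eq, Acomp, map_neg, sub_neg_eq_add]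
    | Nat.succ p, ih =>
      simp only [Nat.succ_eq_add_one] at ih ⊢
      set M := charmatrix (Acomp (p+2) x) with hM
      rw [Matrix.det_succ_row M (Fin.last (p+1))]
      rw [Fin.sum_univ_succ, Fin.sum_univ_castSucc]
      -- middle terms vanish
      have hmid : ∀ j : Fin p,
          (-1 : ℝ[X]) ^ ((Fin.last (p+1) : ℕ) + ((j.castSucc.succ : Fin (p+2)) : ℕ))
            * M (Fin.last (p+1)) j.castSucc.succ
            * (M.submatrix (Fin.last (p+1)).succAbove (j.castSucc.succ).succAbove).det = 0 := by
        intro j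
        have h1 : Fin.last (p+1) ≠ j.castSucc.succ := by
          simp [Fin.ext_iff]; omega
        have h2 : M (Fin.last (p+1)) j.castSucc.succ = 0 := by
          rw [hM, charmatrix_apply_ne _ _ _ h1]
          have : Acomp (p+2) x (Fin.last (p+1)) j.castSucc.succ = 0 := by
            simp [Acomp, Fin.ext_iff]
            omega
          rw [this, map_zero, neg_zero]
        rw [h2]; ring
      rw [Finset.sum_congr rfl (fun j _ => hmid j), Finset.sum_const_zero]
      rw [Fin.succ_last]
      have hA : M (Fin.last (p+1)) 0 = C (x (Fin.last (p+1))) := by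
        rw [hM, charmatrix_apply_ne _ _ _ (by simp [Fin.ext_iff])]
        have : Acomp (p+2) x (Fin.last (p+1)) 0 = -(x (Fin.last (p+1))) := by
          simp [Acomp]
        rw [this, map_neg, neg_neg]
      have hX : M (Fin.last (p+1)) (Fin.last (p+1)) = X := by
        rw [hM, charmatrix_apply_eq]
        have : Acomp (p+2) x (Fin.last (p+1)) (Fin.last (p+1)) = 0 := by
          simp [Acomp, Fin.ext_iff]
        rw [this, map_zero, sub_zero]
      have hlow : (M.submatrix (Fin.last (p+1)).succAbove (Fin.succAbove 0)).det
          = (-1 : ℝ[X])^(p+1) := by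
        rw [Fin.succAbove_last, Fin.succAbove_zero]
        rw [Matrix.det_of_lowerTriangular _ ?_]
        · have hdiag : ∀ i : Fin (p+1),
              M.submatrix Fin.castSucc Fin.succ i i = -1 := by
            intro i
            rw [Matrix.submatrix_apply, hM,
              charmatrix_apply_ne _ _ _ (by simp [Fin.ext_iff])]
            have : Acomp (p+2) x i.castSucc i.succ = 1 := by simp [Acomp]
            rw [this]
            simp
          rw [Finset.prod_congr rfl (fun i _ => hdiag i), Finset.prod_const]
          simp
        · intro i j hij
          have h : (i : ℕ) < (j : ℕ) := hij
          rw [Matrix.submatrix_apply, hM,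
            charmatrix_apply_ne _ _ _ (by simp [Fin.ext_iff]; omega)]
          have : Acomp (p+2) x i.castSucc j.succ = 0 := by
            simp [Acomp]; omega
          rw [this, map_zero, neg_zero]
      have hsub : M.submatrix (Fin.last (p+1)).succAbove (Fin.last (p+1)).succAbove
          = charmatrix (Acomp (p+1) (fun i : Fin (p+1) => x i.castSucc)) := by
        rw [Fin.succAbove_last]
        ext i j : 2
        by_cases h : i = j
        · subst h
          rw [Matrix.submatrix_apply, hM, charmatrix_apply_eq, charmatrix_apply_eq,
            show Acomp (p+2) x i.castSucc i.castSucc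
                = Acomp (p+1) (fun i : Fin (p+1) => x i.castSucc) i i from by simp [Acomp]]
        · rw [Matrix.submatrix_apply, hM,
            charmatrix_apply_ne _ _ _ (by simpa [Fin.castSucc_inj] using h),
            charmatrix_apply_ne _ _ _ h,
            show Acomp (p+2) x i.castSucc j.castSucc
                = Acomp (p+1) (fun i : Fin (p+1) => x i.castSucc) i j from by simp [Acomp]]
      rw [hA, hX, hlow, hsub, ih]
      have hsgn : ((-1 : ℝ[X]))^((p+1)+(p+1)) = 1 := Even.neg_one_pow ⟨p+1, rfl⟩
      simp only [Fin.val_last, Fin.val_zero, Nat.add_zero]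
      rw [Fin.sum_univ_castSucc
        (f := fun i : Fin (p+2) => C (x i) * X ^ (p+2-1-(i:ℕ)))]
      have hpow : ∀ i : Fin (p+1),
          X * (C (x i.castSucc) * X ^ (p.succ - 1 - (i:ℕ)))
            = C (x i.castSucc) * X ^ (p+2-1-((i.castSucc : Fin (p+2)):ℕ)) := by
        intro i
        have hi : (i : ℕ) ≤ p := Fin.is_le i
        have : (p+2-1-((i.castSucc : Fin (p+2)):ℕ)) = (p.succ - 1 - (i:ℕ)) + 1 := by
          simp; omega
        rw [this, pow_succ]; ring
      rw [mul_comm ((-1:ℝ[X])^(p+1)), mul_assoc, ← pow_add, hsgn, mul_one, one_mul,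
        zero_add, mul_add, Finset.mul_sum]
      simp only [hpow]
      have hlastexp : (p+2-1-((Fin.last (p+1) : Fin (p+2)):ℕ)) = 0 := by simp
      rw [hlastexp, pow_zero, mul_one, ← pow_succ']
      ring

/-- the first companion operator field `A(x)` with `σ_i = x_i`
is Nijenhuis (its Nijenhuis torsion, in the coordinate formula, vanishes
identically), and its characteristic polynomial at `x` is
`t^n + x₁ t^{n−1} + ⋯ + x_n`. -/
theorem stmt17 (n : ℕ) :
    (∀ (x : Fin n → ℝ) (i j m : Fin n),
      ∑ k : Fin n,
        (Acomp n x k j * pd k (fun y => Acomp n y i m) x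
          - Acomp n x k m * pd k (fun y => Acomp n y i j) x
          - Acomp n x i k * pd j (fun y => Acomp n y k m) x
          + Acomp n x i k * pd m (fun y => Acomp n y k j) x) = 0) ∧
    (∀ x : Fin n → ℝ,
      (Acomp n x).charpoly =
        X ^ n + ∑ i : Fin n, C (x i) * X ^ (n - 1 - (i : ℕ))) := by
  constructor
  · intro x i j m
    simp only [pd_Acomp]
    by_cases hm : (m:ℕ) = 0 <;> by_cases hj : (j:ℕ) = 0 <;>
      simp [hm, hj, mul_ite, ite_mul, mul_neg, mul_zero, mul_one,
        Finset.sum_sub_distrib, Finset.sum_add_distrib, Finset.sum_ite_eq, Finset.sum_ite_eq']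
  · intro x
    rw [Matrix.charpoly]
    exact det_charmatrix_Acomp n x
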